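/- If T : L^n → M is a symmetric lattice n-homomorphism between distributive lattices (n ≥ 2), then for all x_1,...,x_n ∈ L: T(x_1,x_1,x_3,...,x_n) ∧ T(x_2,x_2,x_3,...,x_n) ≤ T(x_1,x_2,x_3,...,x_n) ≤ T(x_1,x_1,x_3,...,x_n) ∨ T(x_2,x_2,x_3,...,x_n). -/
import Mathlib


def median {L : Type*} [DistribLattice L] {n : ℕ} (k : ℕ) (hk1 : 1 ≤ k) (hkn : k ≤ n)
    (x : Fin n → L) : L :=
  ((Finset.univ.powersetCard (n + 1 - k)).attach).sup'
    (Finset.attach_nonempty_iff.mpr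
      (Finset.powersetCard_nonempty.mpr (by simp [Finset.card_univ]; omega)))
    fun s => s.1.inf'
      (Finset.card_pos.mp (by
        have h := (Finset.mem_powersetCard.mp s.2).2
        omega)) x

def medianInf {L : Type*} [DistribLattice L] {n : ℕ} (k : ℕ) (hk1 : 1 ≤ k) (hkn : k ≤ n)
    (x : Fin n → L) : L :=
  ((Finset.univ.powersetCard (n + 1 - k)).attach).inf'
    (Finset.attach_nonempty_iff.mpr
      (Finset.powersetCard_nonempty.mpr (by simp [Finset.card_univ]; omega)))
    fun s => s.1.sup'
      (Finset.card_pos.mp (by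
        have h := (Finset.mem_powersetCard.mp s.2).2
        omega)) x
def TotalOrderizationInvariant {L : Type*} [DistribLattice L] {A : Type*} {n : ℕ}
    (T : (Fin n → L) → A) : Prop :=
  ∀ x : Fin n → L,
    T x = T fun k => median (k.1 + 1) (Nat.succ_le_succ (Nat.zero_le _)) k.2 x

/-- `T` is symmetric: invariant under every permutation of its arguments. -/
def IsSymmetricMap {L A : Type*} {n : ℕ} (T : (Fin n → L) → A) : Prop :=
  ∀ (σ : Equiv.Perm (Fin n)) (x : Fin n → L), T (x ∘ σ) = T x
/-- `T : Lⁿ → M` is a lattice n-homomorphism: in each coordinate separately it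
preserves binary joins and binary meets. -/
def IsLatticeMultiHom {L M : Type*} [DistribLattice L] [DistribLattice M] {n : ℕ}
    (T : (Fin n → L) → M) : Prop :=
  ∀ (x : Fin n → L) (i : Fin n) (y : L),
    T (Function.update x i (x i ⊔ y)) = T x ⊔ T (Function.update x i y) ∧
    T (Function.update x i (x i ⊓ y)) = T x ⊓ T (Function.update x i y)

/-- `P : L → M` is a lattice homomorphism. -/
def IsLatticeHomMap {L M : Type*} [DistribLattice L] [DistribLattice M] (P : L → M) : Prop :=
  ∀ a b : L, P (a ⊔ b) = P a ⊔ P b ∧ P (a ⊓ b) = P a ⊓ P b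

theorem sandwich_aux {L M : Type*} [DistribLattice L] [DistribLattice M] (f : L → L → M)
    (hj0 : ∀ s t y, f (s ⊔ y) t = f s t ⊔ f y t)
    (hm0 : ∀ s t y, f (s ⊓ y) t = f s t ⊓ f y t)
    (hj1 : ∀ s t y, f s (t ⊔ y) = f s t ⊔ f s y)
    (hm1 : ∀ s t y, f s (t ⊓ y) = f s t ⊓ f s y)
    (hsym : ∀ s t, f s t = f t s) (a b : L) :
    f a a ⊓ f b b ≤ f a b ∧ f a b ≤ f a a ⊔ f b b := by
  have e1 : f (a ⊓ b) (a ⊔ b) = f a b ⊓ (f a a ⊔ f b b) := by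
    rw [hj1, hm0, hm0, hsym b a, inf_sup_left, inf_comm (f a b) (f a a)]
  have e2 : f (a ⊔ b) (a ⊓ b) = f a b ⊔ (f a a ⊓ f b b) := by
    rw [hm1, hj0, hj0, hsym b a, sup_inf_left, sup_comm (f a b) (f a a)]
  have e3 : f (a ⊓ b) (a ⊔ b) = f (a ⊔ b) (a ⊓ b) := hsym _ _
  constructor
  · calc f a a ⊓ f b b ≤ f a b ⊔ f a a ⊓ f b b := le_sup_right
      _ = f a b ⊓ (f a a ⊔ f b b) := by rw [← e2, ← e3, e1]
      _ ≤ f a b := inf_le_left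
  · calc f a b ≤ f a b ⊔ f a a ⊓ f b b := le_sup_left
      _ = f a b ⊓ (f a a ⊔ f b b) := by rw [← e2, ← e3, e1]
      _ ≤ f a a ⊔ f b b := inf_le_right

/-- For a symmetric lattice n-homomorphism,
T(x₁,x₁,x₃,...,xₙ) ⊓ T(x₂,x₂,x₃,...,xₙ) ≤ T(x₁,...,xₙ)
  ≤ T(x₁,x₁,x₃,...,xₙ) ⊔ T(x₂,x₂,x₃,...,xₙ). -/
theorem symm_multiHom_between {L M : Type*} [DistribLattice L] [DistribLattice M]
    {n : ℕ} (hn : 2 ≤ n) (T : (Fin n → L) → M) (hT : IsLatticeMultiHom T)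
    (hsymm : IsSymmetricMap T) (x : Fin n → L) :
    T (Function.update x ⟨1, by omega⟩ (x ⟨0, by omega⟩)) ⊓
        T (Function.update x ⟨0, by omega⟩ (x ⟨1, by omega⟩)) ≤ T x ∧
    T x ≤ T (Function.update x ⟨1, by omega⟩ (x ⟨0, by omega⟩)) ⊔
        T (Function.update x ⟨0, by omega⟩ (x ⟨1, by omega⟩)) := by
  have hne : (⟨0, by omega⟩ : Fin n) ≠ ⟨1, by omega⟩ := by simp [Fin.ext_iff]
  set i0 : Fin n := ⟨0, by omega⟩ with hi0
  set i1 : Fin n := ⟨1, by omega⟩ with hi1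
  set f : L → L → M := fun s t => T (Function.update (Function.update x i0 s) i1 t) with hf
  have hP0 : ∀ s t, (Function.update (Function.update x i0 s) i1 t) i0 = s := by
    intro s t
    rw [Function.update_of_ne hne, Function.update_self]
  have hP1 : ∀ s t, (Function.update (Function.update x i0 s) i1 t) i1 = t := by
    intro s t; rw [Function.update_self]
  have hU0 : ∀ s t z, Function.update (Function.update (Function.update x i0 s) i1 t) i0 z
      = Function.update (Function.update x i0 z) i1 t := by
    intro s t z
    rw [Function.update_comm hne.symm, Function.update_idem]
  have hU1 : ∀ s t z, Function.update (Function.update (Function.update x i0 s) i1 t) i1 z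
      = Function.update (Function.update x i0 s) i1 z := by
    intro s t z; rw [Function.update_idem]
  have hj0 : ∀ s t y, f (s ⊔ y) t = f s t ⊔ f y t := by
    intro s t y
    have h := (hT (Function.update (Function.update x i0 s) i1 t) i0 y).1
    rw [hP0, hU0, hU0] at h
    exact h
  have hm0 : ∀ s t y, f (s ⊓ y) t = f s t ⊓ f y t := by
    intro s t y
    have h := (hT (Function.update (Function.update x i0 s) i1 t) i0 y).2
    rw [hP0, hU0, hU0] at h
    exact h
  have hj1 : ∀ s t y, f s (t ⊔ y) = f s t ⊔ f s y := by
    intro s t y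
    have h := (hT (Function.update (Function.update x i0 s) i1 t) i1 y).1
    rw [hP1, hU1, hU1] at h
    exact h
  have hm1 : ∀ s t y, f s (t ⊓ y) = f s t ⊓ f s y := by
    intro s t y
    have h := (hT (Function.update (Function.update x i0 s) i1 t) i1 y).2
    rw [hP1, hU1, hU1] at h
    exact h
  have hsym : ∀ s t, f s t = f t s := by
    intro s t
    have h := hsymm (Equiv.swap i0 i1) (Function.update (Function.update x i0 t) i1 s)
    have hcomp : (Function.update (Function.update x i0 t) i1 s) ∘ (Equiv.swap i0 i1)
        = Function.update (Function.update x i0 s) i1 t := by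
      funext k
      simp only [Function.comp_apply]
      by_cases h0 : k = i0
      · subst h0
        rw [Equiv.swap_apply_left, Function.update_self, Function.update_of_ne hne,
          Function.update_self]
      · by_cases h1 : k = i1
        · subst h1
          rw [Equiv.swap_apply_right, Function.update_of_ne hne, Function.update_self,
            Function.update_self]
        · rw [Equiv.swap_apply_of_ne_of_ne h0 h1, Function.update_of_ne h1,
            Function.update_of_ne h1, Function.update_of_ne h0, Function.update_of_ne h0]
    rw [hcomp] at h
    simp only [hf]
    exact h
  have key := sandwich_aux f hj0 hm0 hj1 hm1 hsym (x i0) (x i1)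
  have ea : f (x i0) (x i0) = T (Function.update x i1 (x i0)) := by
    simp only [hf]
    rw [Function.update_eq_self]
  have eb : f (x i1) (x i1) = T (Function.update x i0 (x i1)) := by
    simp only [hf]
    rw [Function.update_comm hne, Function.update_eq_self]
  have ex : f (x i0) (x i1) = T x := by
    simp only [hf]
    rw [Function.update_eq_self, Function.update_eq_self]
  rw [ea, eb, ex] at key
  exact key
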